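/- Under matched decoding (GMI computed with the true channel and s_o = 1), the GMI relation GMI = Δ_H holds, i.e., E[log₂( p_{Y|B}(Y|B)/Σ_b P_B(b) p_{Y|B}(Y|b) )] with the factorized bitwise auxiliary channel equals H(B) - Σᵢ H(Bᵢ|Y), where the auxiliary channel is q_{Y|B}(y|b) = (∏ᵢP_{Bᵢ}(bᵢ)/P_B(b)) ∏ᵢ p_{Y|Bᵢ}(y|bᵢ) with true bitwise channels p_{Y|Bᵢ}. -/

import Mathlib

open Real

set_option maxHeartbeats 1000000 in
/-- under matched decoding (`s_o = 1`, bitwise auxiliary channels equal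
to the true bitwise channels), the GMI with the product-factorized auxiliary channel
`q_{Y|B}(y|b) = (∏ᵢP_{Bᵢ}(bᵢ)/P_B(b)) ∏ᵢ p_{Y|Bᵢ}(y|bᵢ)` equals
`Δ_H = H(B) - Σᵢ H(Bᵢ|Y)`. Modeled with a finite output alphabet `𝒴` and strictly
positive joint pmf `p`. -/
theorem GMI_eq_DeltaH_matched
    (m : ℕ) (hm : 0 < m)
    {𝒴 : Type*} [Fintype 𝒴] [Nonempty 𝒴]
    (p : (Fin m → Bool) → 𝒴 → ℝ)
    (hppos : ∀ b y, 0 < p b y)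
    (hpsum : ∑ b, ∑ y, p b y = 1)
    (PB : (Fin m → Bool) → ℝ) (hPB : ∀ b, PB b = ∑ y, p b y)
    (Pm : Fin m → Bool → ℝ)
    (hPm : ∀ i c, Pm i c = ∑ b ∈ Finset.univ.filter (fun b => b i = c), PB b)
    (PY : 𝒴 → ℝ) (hPY : ∀ y, PY y = ∑ b, p b y)
    (pYBi : Fin m → Bool → 𝒴 → ℝ)
    (hpYBi : ∀ i c y, pYBi i c y
      = (∑ b ∈ Finset.univ.filter (fun b => b i = c), p b y) / Pm i c)
    (Q : (Fin m → Bool) → 𝒴 → ℝ)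
    (hQ : ∀ b y, Q b y = ((∏ i, Pm i (b i)) / PB b) * ∏ i, pYBi i (b i) y)
    (GMI : ℝ)
    (hGMI : GMI = ∑ b, ∑ y, p b y
      * Real.logb 2 (Q b y / ∑ b', PB b' * Q b' y))
    (HB : ℝ) (hHB : HB = -∑ b, PB b * Real.logb 2 (PB b))
    (HBiY : Fin m → ℝ)
    (hHBiY : ∀ i, HBiY i = -∑ c : Bool, ∑ y,
      (∑ b ∈ Finset.univ.filter (fun b => b i = c), p b y)
        * Real.logb 2 ((∑ b ∈ Finset.univ.filter (fun b => b i = c), p b y) / PY y)) :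
    GMI = HB - ∑ i, HBiY i := by
  classical
  set S : Fin m → Bool → 𝒴 → ℝ :=
    fun i c y => ∑ b ∈ Finset.univ.filter (fun b => b i = c), p b y with hS
  have hPBpos : ∀ b, 0 < PB b := fun b => by
    rw [hPB]; exact Finset.sum_pos (fun y _ => hppos b y) Finset.univ_nonempty
  have hSpos : ∀ i c y, 0 < S i c y := by
    intro i c y
    refine Finset.sum_pos (fun b _ => hppos b y) ⟨fun _ => c, ?_⟩
    simp
  have hPmpos : ∀ i c, 0 < Pm i c := by
    intro i c; rw [hPm]
    refine Finset.sum_pos (fun b _ => hPBpos b) ⟨fun _ => c, ?_⟩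
    simp
  have hPYpos : ∀ y, 0 < PY y := fun y => by
    rw [hPY]; exact Finset.sum_pos (fun b _ => hppos b y) Finset.univ_nonempty
  have hPYS : ∀ (i : Fin m) y, PY y = ∑ c : Bool, S i c y := by
    intro i y
    rw [hPY]
    exact (Finset.sum_fiberwise Finset.univ (fun b => b i) (fun b => p b y)).symm
  -- Q b y = (∏ i, S i (b i) y) / PB b
  have hQ' : ∀ b y, Q b y = (∏ i, S i (b i) y) / PB b := by
    intro b y
    rw [hQ]
    have h1 : ∀ i : Fin m, pYBi i (b i) y = S i (b i) y / Pm i (b i) :=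
      fun i => hpYBi i (b i) y
    rw [Finset.prod_congr rfl (fun i _ => h1 i), Finset.prod_div_distrib]
    have hPmne : (∏ i, Pm i (b i)) ≠ 0 :=
      Finset.prod_ne_zero_iff.2 (fun i _ => (hPmpos i (b i)).ne')
    rw [div_mul_div_comm, mul_comm (PB b) (∏ i, Pm i (b i)),
      mul_div_mul_left _ _ hPmne]
  -- denominator equals PY y ^ m
  have hdenom : ∀ y, (∑ b', PB b' * Q b' y) = PY y ^ m := by
    intro y
    have h1 : ∀ b', PB b' * Q b' y = ∏ i, S i (b' i) y := by
      intro b'; rw [hQ', ← mul_div_assoc]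
      exact mul_div_cancel_left₀ _ (hPBpos b').ne'
    rw [Finset.sum_congr rfl (fun b' _ => h1 b')]
    have h2 : (∑ b' : Fin m → Bool, ∏ i, S i (b' i) y)
        = ∏ i, ∑ c : Bool, S i c y := by
      rw [Finset.prod_univ_sum, Fintype.piFinset_univ]
    rw [h2]
    have h3 : ∀ i : Fin m, (∑ c : Bool, S i c y) = PY y := fun i => (hPYS i y).symm
    rw [Finset.prod_congr rfl (fun i _ => h3 i), Finset.prod_const,
      Finset.card_univ, Fintype.card_fin]
  -- log of the ratio
  have hlog : ∀ b y, Real.logb 2 (Q b y / ∑ b', PB b' * Q b' y)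
      = (∑ i, Real.logb 2 (S i (b i) y / PY y)) - Real.logb 2 (PB b) := by
    intro b y
    rw [hdenom, hQ']
    have key : (∏ i, S i (b i) y) / PB b / (PY y ^ m)
        = (∏ i, (S i (b i) y / PY y)) / PB b := by
      rw [Finset.prod_div_distrib, Finset.prod_const, Finset.card_univ,
        Fintype.card_fin]
      field_simp
    rw [key]
    have hprodpos : 0 < ∏ i, (S i (b i) y / PY y) :=
      Finset.prod_pos (fun i _ => div_pos (hSpos i (b i) y) (hPYpos y))
    rw [Real.logb_div hprodpos.ne' (hPBpos b).ne']
    congr 1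
    rw [Real.logb, Real.log_prod (fun i _ => (div_pos (hSpos i (b i) y) (hPYpos y)).ne'),
      Finset.sum_div]
    rfl
  rw [hGMI]
  have hsplit : (∑ b, ∑ y, p b y * Real.logb 2 (Q b y / ∑ b', PB b' * Q b' y))
      = (∑ b, ∑ y, p b y * ∑ i, Real.logb 2 (S i (b i) y / PY y))
        - (∑ b, ∑ y, p b y * Real.logb 2 (PB b)) := by
    rw [← Finset.sum_sub_distrib]
    refine Finset.sum_congr rfl (fun b _ => ?_)
    rw [← Finset.sum_sub_distrib]
    refine Finset.sum_congr rfl (fun y _ => ?_)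
    rw [hlog b y]
    ring
  rw [hsplit]
  -- second term equals -HB
  have hterm2 : (∑ b, ∑ y, p b y * Real.logb 2 (PB b)) = -HB := by
    rw [hHB, neg_neg]
    refine Finset.sum_congr rfl (fun b _ => ?_)
    rw [← Finset.sum_mul, ← hPB]
  -- first term equals -∑ HBiY
  have hterm1 : (∑ b, ∑ y, p b y * ∑ i, Real.logb 2 (S i (b i) y / PY y))
      = -∑ i, HBiY i := by
    have step1 : (∑ b, ∑ y, p b y * ∑ i, Real.logb 2 (S i (b i) y / PY y))
        = ∑ i, ∑ y, ∑ b : Fin m → Bool, p b y * Real.logb 2 (S i (b i) y / PY y) :=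
      calc (∑ b, ∑ y, p b y * ∑ i, Real.logb 2 (S i (b i) y / PY y))
          = ∑ b, ∑ y, ∑ i, p b y * Real.logb 2 (S i (b i) y / PY y) :=
            Finset.sum_congr rfl fun b _ => Finset.sum_congr rfl fun y _ => by
              rw [Finset.mul_sum]
        _ = ∑ b : Fin m → Bool, ∑ i, ∑ y, p b y * Real.logb 2 (S i (b i) y / PY y) :=
            Finset.sum_congr rfl fun b _ => Finset.sum_comm
        _ = ∑ i, ∑ b : Fin m → Bool, ∑ y, p b y * Real.logb 2 (S i (b i) y / PY y) :=
            Finset.sum_comm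
        _ = ∑ i, ∑ y, ∑ b : Fin m → Bool, p b y * Real.logb 2 (S i (b i) y / PY y) :=
            Finset.sum_congr rfl fun i _ => Finset.sum_comm
    rw [step1, ← Finset.sum_neg_distrib]
    refine Finset.sum_congr rfl (fun i _ => ?_)
    rw [hHBiY, neg_neg]
    have key : ∀ y, (∑ b : Fin m → Bool, p b y * Real.logb 2 (S i (b i) y / PY y))
        = ∑ c : Bool, S i c y * Real.logb 2 (S i c y / PY y) := by
      intro y
      have fib : (∑ b : Fin m → Bool, p b y * Real.logb 2 (S i (b i) y / PY y))
          = ∑ c : Bool, ∑ b ∈ Finset.univ.filter (fun b => b i = c),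
              p b y * Real.logb 2 (S i (b i) y / PY y) :=
        (Finset.sum_fiberwise Finset.univ (fun b => b i)
          (fun b => p b y * Real.logb 2 (S i (b i) y / PY y))).symm
      rw [fib]
      refine Finset.sum_congr rfl (fun c _ => ?_)
      have h5 : ∀ b ∈ Finset.univ.filter (fun b : Fin m → Bool => b i = c),
          p b y * Real.logb 2 (S i (b i) y / PY y)
            = p b y * Real.logb 2 (S i c y / PY y) := by
        intro b hb
        rw [(Finset.mem_filter.1 hb).2]
      rw [Finset.sum_congr rfl h5, ← Finset.sum_mul]
    calc (∑ y, ∑ b : Fin m → Bool, p b y * Real.logb 2 (S i (b i) y / PY y))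
        = ∑ y, ∑ c : Bool, S i c y * Real.logb 2 (S i c y / PY y) :=
          Finset.sum_congr rfl fun y _ => key y
      _ = ∑ c : Bool, ∑ y, S i c y * Real.logb 2 (S i c y / PY y) := Finset.sum_comm
  rw [hterm1, hterm2]
  ring
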